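/- Let G be a tournament with source s and sink t, let e = (a,b) be an arc, and let x be a vertex with arcs (a,x) and (x,b). If there exists a directed s-t path P in G - x that uses arc e, then every tracking set of G contains x. -/

import Mathlib

noncomputable def trackSeq {V : Type} (T : Set V) (l : List V) : List V :=
  l.filter (fun v => @decide (v ∈ T) (Classical.propDecidable _))

/-- A directed walk from `s` to `t` in the digraph given by the arc relation `A`,
recorded as its list of vertices. -/
def IsDiwalk {V : Type} (A : V → V → Prop) (s t : V) (l : List V) : Prop :=
  l ≠ [] ∧ l.Chain' A ∧ l.head? = some s ∧ l.getLast? = some t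

/-- A simple directed path from `s` to `t`. -/
def IsDipath {V : Type} (A : V → V → Prop) (s t : V) (l : List V) : Prop :=
  IsDiwalk A s t l ∧ l.Nodup

/-- A tournament: no self-loops and exactly one arc between any two distinct vertices. -/
def IsTournament {V : Type} (A : V → V → Prop) : Prop :=
  (∀ v, ¬ A v v) ∧ (∀ u v : V, u ≠ v → (A u v ↔ ¬ A v u))

/-- The walk `l` uses the arc `(a, b)`. -/
def ArcIn {V : Type} (a b : V) (l : List V) : Prop :=
  ∃ l1 l2 : List V, l = l1 ++ a :: b :: l2

/-- `T` is a tracking set for directed `s`-`t` paths. -/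
def IsDiTrackingSet {V : Type} (A : V → V → Prop) (s t : V) (T : Set V) : Prop :=
  ∀ p q : List V, IsDipath A s t p → IsDipath A s t q →
    trackSeq T p = trackSeq T q → p = q

theorem stmt6 {V : Type} [Fintype V] (A : V → V → Prop) (htour : IsTournament A)
    (s t a b x : V) (hab : A a b) (hax : A a x) (hxb : A x b)
    (hP : ∃ l : List V, IsDipath A s t l ∧ x ∉ l ∧ ArcIn a b l) :
    ∀ T : Set V, IsDiTrackingSet A s t T → x ∈ T := by
  intro T hT
  by_contra hx
  obtain ⟨l, ⟨⟨hne, hch, hh, hl⟩, hnd⟩, hxl, l1, l2, hleq⟩ := hP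
  subst hleq
  have hxnot : x ∉ l1 ++ a :: b :: l2 := hxl
  simp only [List.mem_append, List.mem_cons, not_or] at hxnot
  obtain ⟨hx1, hxa, hxb', hx2⟩ := hxnot
  rw [List.Chain', List.isChain_append] at hch
  obtain ⟨hc1, hc2, hc3⟩ := hch
  rw [List.isChain_cons_cons] at hc2
  have hch' : (l1 ++ a :: x :: b :: l2).Chain' A := by
    rw [List.Chain', List.isChain_append]
    refine ⟨hc1, ?_, ?_⟩
    · rw [List.isChain_cons_cons, List.isChain_cons_cons]
      exact ⟨hax, hxb, hc2.2⟩
    · intro y hy z hz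
      simp only [List.head?_cons, Option.mem_some_iff] at hz
      subst hz
      exact hc3 y hy a rfl
  have hh' : (l1 ++ a :: x :: b :: l2).head? = some s := by
    cases l1 with
    | nil => simpa using hh
    | cons c cs => simpa using hh
  have hlast' : (l1 ++ a :: x :: b :: l2).getLast? = some t := by
    rw [List.getLast?_append]
    rw [List.getLast?_append] at hl
    simpa using hl
  rw [List.nodup_append'] at hnd
  obtain ⟨hn1, hn2, hdisj⟩ := hnd
  simp only [List.nodup_cons, List.mem_cons, not_or] at hn2
  have hnd' : (l1 ++ a :: x :: b :: l2).Nodup := by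
    rw [List.nodup_append']
    refine ⟨hn1, ?_, ?_⟩
    · simp only [List.nodup_cons, List.mem_cons, not_or]
      exact ⟨⟨fun h => hxa h.symm, hn2.1.1, hn2.1.2⟩, ⟨hxb', hx2⟩, hn2.2⟩
    · intro y hy hz
      simp only [List.mem_cons] at hz
      rcases hz with rfl | rfl | rfl | hz
      · exact hdisj hy (by simp)
      · exact hx1 hy
      · exact hdisj hy (by simp)
      · exact hdisj hy (by simp [hz])
  have hxd : (@decide (x ∈ T) (Classical.propDecidable _)) = false :=
    @decide_eq_false _ (Classical.propDecidable _) hx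
  have htr : trackSeq T (l1 ++ a :: b :: l2) = trackSeq T (l1 ++ a :: x :: b :: l2) := by
    simp only [trackSeq, List.filter_append, List.filter_cons, hxd]
    simp
  have heq := hT _ _ ⟨⟨hne, ⟨by rw [List.Chain', List.isChain_append]; exact ⟨hc1, List.isChain_cons_cons.2 hc2, hc3⟩,
      hh, hl⟩⟩, List.nodup_append'.2 ⟨hn1, by
        simp only [List.nodup_cons, List.mem_cons, not_or]
        exact ⟨⟨hn2.1.1, hn2.1.2⟩, hn2.2⟩, hdisj⟩⟩
    ⟨⟨by simp, hch', hh', hlast'⟩, hnd'⟩ htr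
  have : x ∈ l1 ++ a :: b :: l2 := by rw [heq]; simp
  exact hxl this
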